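/- Let G : {0,1}^n → ℝ, let p_1,...,p_n ∈ (0,1] define a product (fully-factorized) distribution Pr on {0,1}^n, and for z > 0 define the product distribution Pr_z with Pr_z(X_j = 1) = (p_j + z)/(1 + z). Then Σ_{k=0}^{n} z^k · v_k = (1+z)^n · E_{Pr_z}[G], where v_k = Σ_{S ⊆ [n], |S|=k} E_{Pr}[G | X_S = 1]. -/

import Mathlib

open Finset

/-- Product (fully-factorized) distribution on `{0,1}^n` with `Pr(X_i = 1) = p i`. -/
noncomputable def prodPr {n : ℕ} (p : Fin n → ℝ) (x : Fin n → Bool) : ℝ :=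
  ∏ i : Fin n, if x i then p i else 1 - p i

/-- `E_Pr[G | X_S = 1]`, using `Pr(X_S = 1) = ∏_{i ∈ S} p i`. -/
noncomputable def condExpProd {n : ℕ} (G : (Fin n → Bool) → ℝ) (p : Fin n → ℝ)
    (S : Finset (Fin n)) : ℝ :=
  (∑ x : Fin n → Bool, if ∀ i ∈ S, x i = true then G x * prodPr p x else 0) /
    ∏ i ∈ S, p i

theorem stmt4 {n : ℕ} (G : (Fin n → Bool) → ℝ) (p : Fin n → ℝ)
    (hp : ∀ i, 0 < p i ∧ p i ≤ 1) (z : ℝ) (hz : 0 < z) :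
    ∑ k ∈ Finset.range (n + 1),
        z ^ k * ∑ S ∈ Finset.univ.powersetCard k, condExpProd G p S =
      (1 + z) ^ n *
        ∑ x : Fin n → Bool, G x * prodPr (fun j => (p j + z) / (1 + z)) x := by
    classical
  have h1z : (0:ℝ) < 1 + z := by linarith
  have hL : (∑ k ∈ Finset.range (n + 1),
      z ^ k * ∑ S ∈ Finset.univ.powersetCard k, condExpProd G p S) =
      ∑ S ∈ (Finset.univ : Finset (Fin n)).powerset, z ^ S.card * condExpProd G p S := by
    rw [powerset_card_biUnion, sum_biUnion (fun i _ j _ hij => pairwise_disjoint_powersetCard _ hij), card_univ, Fintype.card_fin]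
    refine Finset.sum_congr rfl fun k _ => ?_
    rw [mul_sum]
    refine Finset.sum_congr rfl fun S hS => ?_
    rw [(mem_powersetCard.mp hS).2]
  rw [hL]
  have hrw : ∀ S : Finset (Fin n), z ^ S.card * condExpProd G p S =
      ∑ x : Fin n → Bool, (if ∀ i ∈ S, x i = true then
        G x * prodPr p x * ∏ i ∈ S, z / p i else 0) := by
    intro S
    rw [condExpProd, Finset.sum_div, mul_sum]
    refine Finset.sum_congr rfl fun x _ => ?_
    split_ifs with h
    · have hne : (∏ i ∈ S, p i) ≠ 0 :=
        Finset.prod_ne_zero_iff.mpr fun i _ => (hp i).1.ne'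
      rw [Finset.prod_div_distrib, Finset.prod_const]
      field_simp
    · simp
  simp_rw [hrw]
  rw [Finset.sum_comm, mul_sum]
  refine Finset.sum_congr rfl fun x _ => ?_
  set T := Finset.univ.filter (fun i => x i = true) with hT
  have hstep : (∑ S ∈ (Finset.univ : Finset (Fin n)).powerset,
      if ∀ i ∈ S, x i = true then G x * prodPr p x * ∏ i ∈ S, z / p i else 0) =
      ∑ S ∈ T.powerset, G x * prodPr p x * ∏ i ∈ S, z / p i := by
    rw [← Finset.sum_filter]
    apply Finset.sum_congr _ fun _ _ => rfl
    ext S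
    simp only [Finset.mem_filter, Finset.mem_powerset, Finset.subset_univ, true_and, hT]
    constructor
    · intro h i hi
      simp [h i hi]
    · intro h i hi
      simpa using h hi
  rw [hstep, ← Finset.mul_sum]
  have hps : (∑ S ∈ T.powerset, ∏ i ∈ S, z / p i) = ∏ i ∈ T, (z / p i + 1) := by
    rw [Finset.prod_add]
    simp
  rw [hps]
  have key : prodPr p x * ∏ i ∈ T, (z / p i + 1)
      = (1 + z) ^ n * prodPr (fun j => (p j + z) / (1 + z)) x := by
    rw [prodPr, prodPr, hT, Finset.prod_filter, ← Finset.prod_mul_distrib,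
        show ((1:ℝ) + z) ^ n = ∏ _i : Fin n, (1 + z) by simp,
        ← Finset.prod_mul_distrib]
    refine Finset.prod_congr rfl fun i _ => ?_
    rcases hp i with ⟨h0, _⟩
    by_cases hx : x i <;> simp only [hx, if_true, if_false, decide_eq_true_eq, Bool.false_eq_true] <;>
      field_simp <;> ring
  rw [mul_assoc, key]
  ring
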